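/- Let β ∈ (0,1], γ > 0, and let (A_{m,n})_{m,n∈ℕ} be a matrix of complex numbers with |A_{m,n}| ≤ C_γ·e^{−γ|m−n|^β} for some C_γ > 0 and all m, n (i.e., the matrix belongs to the class E_{γ,β}). Let μ : ℝ → (0,∞) be a β_μ-sub-exponential weight with β_μ < β. Then for every p ∈ [1,∞) there exists K > 0 such that for every complex sequence (c_n)_{n≥1} with Σ_n |c_n|^p μ(n)^p < ∞: each series a_m = Σ_{n=1}^∞ A_{m,n} c_n converges absolutely, and Σ_m |a_m|^p μ(m)^p ≤ K^p · Σ_n |c_n|^p μ(n)^p. That is, the matrix operator maps ℓ^p_μ boundedly into ℓ^p_μ. -/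

import Mathlib

open Real Filter
open scoped ENNReal
open MeasureTheory



lemma aux_summable_exp {δ b : ℝ} (hδ : 0 < δ) (hb : 0 < b) :
    Summable (fun k : ℕ => Real.exp (-δ * (k:ℝ) ^ b)) := by
  have h1 : Tendsto (fun x : ℝ => 2 * Real.log x - δ * x ^ b) atTop atBot := by
    have h := (isLittleO_log_rpow_atTop hb).const_mul_left 2
    have h2 : Tendsto (fun x : ℝ => -(δ/2) * x ^ b) atTop atBot := by
      exact (tendsto_rpow_atTop hb).const_mul_atTop_of_neg (by linarith)
    refine tendsto_atBot_mono' atTop ?_ h2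
    filter_upwards [h.def (by positivity : (0:ℝ) < δ/2), eventually_ge_atTop (0:ℝ)]
      with x hx hx0
    have h3 : (0:ℝ) ≤ x ^ b := rpow_nonneg hx0 b
    have hx' : 2 * |Real.log x| ≤ δ/2 * (x ^ b) := by
      simpa [norm_eq_abs, abs_of_nonneg h3] using hx
    have := le_abs_self (Real.log x)
    nlinarith
  have h2 : ∀ᶠ k : ℕ in atTop, Real.exp (-δ * (k:ℝ) ^ b) ≤ ((k:ℝ)^2)⁻¹ := by
    have h3 : Tendsto (fun k : ℕ => 2 * Real.log (k:ℝ) - δ * (k:ℝ) ^ b) atTop atBot :=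
      h1.comp tendsto_natCast_atTop_atTop
    filter_upwards [h3.eventually (eventually_le_atBot (0:ℝ)), eventually_ge_atTop 1]
      with k hk hk1
    have hk0 : (0:ℝ) < (k:ℝ) := by exact_mod_cast hk1
    rw [inv_eq_one_div, le_div_iff₀ (by positivity)]
    rw [← Real.exp_log (by positivity : (0:ℝ) < (k:ℝ)^2), ← Real.exp_add, Real.log_pow]
    apply Real.exp_le_one_iff.2
    push_cast
    linarith
  have hsum : Summable (fun k : ℕ => ((k:ℝ)^2)⁻¹) := by
    simpa using Real.summable_nat_pow_inv.2 (by norm_num : 1 < 2)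
  refine summable_of_isBigO_nat hsum (Asymptotics.IsBigO.of_bound 1 ?_)
  filter_upwards [h2, eventually_ge_atTop 1] with k hk hk1
  have hk0 : (0:ℝ) < (k:ℝ) := by exact_mod_cast hk1
  rw [norm_eq_abs, norm_eq_abs, abs_of_nonneg (Real.exp_pos _).le, abs_of_nonneg (by positivity)]
  linarith

lemma aux_dom {γ' δ b b' : ℝ} (hγ' : 0 < γ') (hδ : 0 < δ) (hb' : 0 < b') (hbb : b' < b) :
    ∃ M : ℝ, ∀ t : ℝ, 0 ≤ t → γ' * t ^ b' ≤ δ * t ^ b + M := by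
  set T : ℝ := max 1 ((γ'/δ) ^ (b - b')⁻¹) with hT
  have hT1 : (1:ℝ) ≤ T := le_max_left _ _
  have hT0 : (0:ℝ) < T := lt_of_lt_of_le one_pos hT1
  refine ⟨γ' * T ^ b', fun t ht => ?_⟩
  rcases le_total t T with h | h
  · have : t ^ b' ≤ T ^ b' := Real.rpow_le_rpow ht h hb'.le
    have : γ' * t ^ b' ≤ γ' * T ^ b' := by nlinarith
    have h2 : 0 ≤ δ * t ^ b := by positivity
    linarith
  · -- t ≥ T: γ' t^b' ≤ δ t^b since t^(b-b') ≥ γ'/δ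
    have ht0 : (0:ℝ) < t := lt_of_lt_of_le hT0 h
    have h1 : γ'/δ ≤ t ^ (b - b') := by
      calc γ'/δ = ((γ'/δ) ^ (b - b')⁻¹) ^ (b - b') := by
            rw [← Real.rpow_mul (by positivity), inv_mul_cancel₀ (by linarith), Real.rpow_one]
          _ ≤ T ^ (b - b') := Real.rpow_le_rpow (Real.rpow_nonneg (by positivity) _)
              (le_max_right _ _) (by linarith)
          _ ≤ t ^ (b - b') := Real.rpow_le_rpow hT0.le h (by linarith)
    have h2 : γ' * t ^ b' ≤ δ * t ^ b := by
      have e : t ^ b = t ^ (b - b') * t ^ b' := by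
        rw [← Real.rpow_add ht0]; ring_nf
      rw [e]
      have hb'0 : (0:ℝ) ≤ t ^ b' := Real.rpow_nonneg ht0.le _
      have h1' : γ' ≤ δ * t ^ (b - b') := by
        rw [div_le_iff₀ hδ] at h1; linarith [h1]
      nlinarith
    have : 0 ≤ γ' * T ^ b' := by positivity
    linarith

lemma aux_row (g : ℕ → ℝ≥0∞) (m : ℕ) : ∑' n : ℕ, g (Nat.dist m n) ≤ 2 * ∑' k, g k := by
  classical
  set f1 : ℕ → ℝ≥0∞ := fun n => if n ≤ m then g (m - n) else 0 with hf1
  set f2 : ℕ → ℝ≥0∞ := fun n => if m ≤ n then g (n - m) else 0 with hf2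
  have hle : ∀ n, g (Nat.dist m n) ≤ f1 n + f2 n := by
    intro n
    rcases le_total n m with h | h
    · have hd : Nat.dist m n = m - n := Nat.dist_eq_sub_of_le_right h
      calc g (Nat.dist m n) = f1 n := by simp [f1, hd, h]
        _ ≤ f1 n + f2 n := le_add_right le_rfl
    · have hd : Nat.dist m n = n - m := Nat.dist_eq_sub_of_le h
      calc g (Nat.dist m n) = f2 n := by simp [f2, hd, h]
        _ ≤ f1 n + f2 n := le_add_left le_rfl
  have hb1 : (∑' n, f1 n) ≤ ∑' k, g k := by
    have h0 : ∀ n ∉ Finset.range (m+1), f1 n = 0 := by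
      intro n hn
      simp only [Finset.mem_range, Nat.lt_succ_iff, not_le] at hn
      simp [f1, hn.not_ge]
    rw [tsum_eq_sum h0]
    have he : ∑ n ∈ Finset.range (m+1), f1 n = ∑ n ∈ Finset.range (m+1), g n := by
      rw [← Finset.sum_range_reflect]
      apply Finset.sum_congr rfl
      intro j hj
      simp only [Finset.mem_range, Nat.lt_succ_iff] at hj
      have hji : m + 1 - 1 - j = m - j := by omega
      rw [hji]
      simp only [f1, if_pos (Nat.sub_le m j), Nat.sub_sub_self hj]
    rw [he]
    exact ENNReal.sum_le_tsum _
  have hb2 : (∑' n, f2 n) = ∑' k, g k := by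
    have hkey := Summable.sum_add_tsum_nat_add' (f := f2) (k := m) ENNReal.summable
    have h1 : ∑ i ∈ Finset.range m, f2 i = 0 := by
      apply Finset.sum_eq_zero
      intro i hi
      simp only [Finset.mem_range] at hi
      simp [f2, hi.not_ge]
    have h2 : ∀ i, f2 (i + m) = g i := by
      intro i; simp [f2, Nat.le_add_left]
    calc (∑' n, f2 n) = ∑ i ∈ Finset.range m, f2 i + ∑' i, f2 (i + m) := hkey.symm
      _ = 0 + ∑' k, g k := by rw [h1]; exact congrArg _ (tsum_congr h2)
      _ = ∑' k, g k := zero_add _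
  calc ∑' n, g (Nat.dist m n) ≤ ∑' n, (f1 n + f2 n) := ENNReal.tsum_le_tsum hle
    _ = (∑' n, f1 n) + ∑' n, f2 n := ENNReal.tsum_add
    _ ≤ (∑' k, g k) + ∑' k, g k := add_le_add hb1 hb2.le
    _ = 2 * ∑' k, g k := (two_mul _).symm

lemma aux_holder {p q : ℝ} (hpq : p.HolderConjugate q) (f g : ℕ → ℝ≥0∞) :
    ∑' n, f n * g n ≤ (∑' n, f n ^ p) ^ (1/p) * (∑' n, g n ^ q) ^ (1/q) := by
  have h := ENNReal.lintegral_mul_le_Lp_mul_Lq (Measure.count : Measure ℕ) hpq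
    (measurable_of_countable f).aemeasurable (measurable_of_countable g).aemeasurable
  simpa [MeasureTheory.lintegral_count] using h

lemma aux_schur {p : ℝ} (hp : 1 ≤ p) (H : ℕ → ℕ → ℝ≥0∞) (x : ℕ → ℝ≥0∞) (S : ℝ≥0∞)
    (hS0 : S ≠ 0) (hStop : S ≠ ∞)
    (hrow : ∀ m, ∑' n, H m n ≤ S) (hcol : ∀ n, ∑' m, H m n ≤ S) :
    ∑' m, (∑' n, H m n * x n) ^ p ≤ S ^ p * ∑' n, x n ^ p := by
  have hswap : ∑' m, (∑' n, H m n * x n ^ p) = ∑' n, (∑' m, H m n) * x n ^ p := by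
    rw [ENNReal.tsum_comm]
    exact tsum_congr fun n => ENNReal.tsum_mul_right
  have hcolbound : ∑' m, (∑' n, H m n * x n ^ p) ≤ S * ∑' n, x n ^ p := by
    rw [hswap, ← ENNReal.tsum_mul_left]
    exact ENNReal.tsum_le_tsum fun n => mul_le_mul_left (hcol n) _
  rcases eq_or_lt_of_le hp with hp1 | hp1
  · cases hp1
    simpa [ENNReal.rpow_one] using hcolbound
  · set q := Real.conjExponent p with hq
    have hpq : p.HolderConjugate q := Real.HolderConjugate.conjExponent hp1
    have hq0 : q ≠ 0 := hpq.symm.ne_zero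
    have hp0 : (0:ℝ) < p := hpq.pos
    have key : ∀ m, (∑' n, H m n * x n) ^ p ≤ S ^ (p - 1) * ∑' n, H m n * x n ^ p := by
      intro m
      have hsplit : ∀ n, H m n * x n = H m n ^ (1/q) * (H m n ^ (1/p) * x n) := by
        intro n
        rw [← mul_assoc,
          ← ENNReal.rpow_add_of_nonneg _ _ hpq.symm.one_div_nonneg hpq.one_div_nonneg,
          one_div, one_div, add_comm, hpq.inv_add_inv_eq_inv, inv_one, ENNReal.rpow_one]
      have hhold := aux_holder hpq.symm (fun n => H m n ^ (1/q))
        (fun n => H m n ^ (1/p) * x n)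
      have he1 : ∀ n, (H m n ^ (1/q)) ^ q = H m n := by
        intro n
        rw [← ENNReal.rpow_mul, one_div, inv_mul_cancel₀ hq0, ENNReal.rpow_one]
      have he2 : ∀ n, (H m n ^ (1/p) * x n) ^ p = H m n * x n ^ p := by
        intro n
        rw [ENNReal.mul_rpow_of_nonneg _ _ hp0.le, ← ENNReal.rpow_mul, one_div,
          inv_mul_cancel₀ hp0.ne', ENNReal.rpow_one]
      calc (∑' n, H m n * x n) ^ p
          = (∑' n, H m n ^ (1/q) * (H m n ^ (1/p) * x n)) ^ p := by rw [tsum_congr hsplit]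
        _ ≤ ((∑' n, (H m n ^ (1/q)) ^ q) ^ (1/q)
              * (∑' n, (H m n ^ (1/p) * x n) ^ p) ^ (1/p)) ^ p :=
            ENNReal.rpow_le_rpow hhold hp0.le
        _ = ((∑' n, H m n) ^ (1/q)) ^ p * ((∑' n, H m n * x n ^ p) ^ (1/p)) ^ p := by
            rw [tsum_congr he1, tsum_congr he2, ENNReal.mul_rpow_of_nonneg _ _ hp0.le]
        _ = (∑' n, H m n) ^ (p - 1) * (∑' n, H m n * x n ^ p) := by
            rw [← ENNReal.rpow_mul, ← ENNReal.rpow_mul,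
              show (1/q)*p = p - 1 from by rw [← hpq.div_conj_eq_sub_one]; ring,
              one_div, inv_mul_cancel₀ hp0.ne', ENNReal.rpow_one]
        _ ≤ S ^ (p-1) * (∑' n, H m n * x n ^ p) :=
            mul_le_mul_left (ENNReal.rpow_le_rpow (hrow m) (by linarith)) _
    calc ∑' m, (∑' n, H m n * x n) ^ p
        ≤ ∑' m, S ^ (p - 1) * (∑' n, H m n * x n ^ p) := ENNReal.tsum_le_tsum key
      _ = S ^ (p - 1) * ∑' m, (∑' n, H m n * x n ^ p) := ENNReal.tsum_mul_left
      _ ≤ S ^ (p - 1) * (S * ∑' n, x n ^ p) := mul_le_mul_right hcolbound _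
      _ = S ^ p * ∑' n, x n ^ p := by
          have hSS : S ^ (p - 1) * S = S ^ p := by
            nth_rewrite 2 [← ENNReal.rpow_one S]
            rw [← ENNReal.rpow_add _ _ hS0 hStop]
            norm_num
          rw [← mul_assoc, hSS]

lemma aux_dist_summable {f : ℕ → ℝ} (hf : Summable f) (a : ℕ) :
    Summable (fun n : ℕ => f (Nat.dist a n)) := by
  rw [← summable_nat_add_iff a]
  refine hf.congr fun n => ?_
  congr 1
  simp [Nat.dist_eq_sub_of_le (Nat.le_add_left a n)]


set_option maxHeartbeats 2000000 in
theorem stmt_11 (β γ : ℝ) (hβ₀ : 0 < β) (hβ₁ : β ≤ 1) (hγ : 0 < γ)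
    (A : ℕ → ℕ → ℂ) (Cγ : ℝ) (hCγ : 0 < Cγ)
    (hA : ∀ m n : ℕ, 1 ≤ m → 1 ≤ n →
      ‖A m n‖ ≤ Cγ * Real.exp (-γ * |(m:ℝ) - (n:ℝ)| ^ β))
    (μ : ℝ → ℝ) (hμpos : ∀ x, 0 < μ x) (hμcont : Continuous μ)
    (βμ : ℝ) (hβμ₀ : 0 < βμ) (hβμ₁ : βμ < 1) (hβμβ : βμ < β)
    (hsub : ∃ Cμ > (0:ℝ), ∃ γ' > (0:ℝ), ∀ t x : ℝ,
      μ (t + x) ≤ Cμ * Real.exp (γ' * |t| ^ βμ) * μ x)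
    (p : ℝ) (hp : 1 ≤ p) :
    ∃ K > (0:ℝ), ∀ c : ℕ → ℂ,
      Summable (fun n : ℕ => ‖c (n+1)‖ ^ p * μ ((n:ℝ) + 1) ^ p) →
      (∀ m : ℕ, 1 ≤ m → Summable (fun n : ℕ => ‖A m (n+1) * c (n+1)‖)) ∧
      Summable (fun m : ℕ =>
        ‖∑' n : ℕ, A (m+1) (n+1) * c (n+1)‖ ^ p * μ ((m:ℝ) + 1) ^ p) ∧
      ∑' m : ℕ, ‖∑' n : ℕ, A (m+1) (n+1) * c (n+1)‖ ^ p * μ ((m:ℝ) + 1) ^ p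
        ≤ K ^ p * ∑' n : ℕ, ‖c (n+1)‖ ^ p * μ ((n:ℝ) + 1) ^ p := by
  classical
  obtain ⟨Cμ, hCμ, γ', hγ', hμsub⟩ := hsub
  set δ : ℝ := γ / 2 with hδdef
  have hδ : 0 < δ := by positivity
  obtain ⟨M, hM⟩ := aux_dom hγ' hδ hβμ₀ hβμβ
  set C' : ℝ := Cγ * Cμ * Real.exp M with hC'def
  have hC' : 0 < C' := by positivity
  -- key pointwise real bound
  have hkey : ∀ m n : ℕ, 1 ≤ m → 1 ≤ n →
      ‖A m n‖ * μ (m:ℝ) ≤ C' * Real.exp (-δ * |(m:ℝ) - (n:ℝ)| ^ β) * μ (n:ℝ) := by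
    intro m n hm hn
    set d : ℝ := |(m:ℝ) - (n:ℝ)| with hd
    have hd0 : 0 ≤ d := abs_nonneg _
    have h1 := hA m n hm hn
    have h2 : μ (m:ℝ) ≤ Cμ * Real.exp (γ' * d ^ βμ) * μ (n:ℝ) := by
      have := hμsub ((m:ℝ) - (n:ℝ)) (n:ℝ)
      simpa [hd] using this
    have h3 : γ' * d ^ βμ ≤ δ * d ^ β + M := hM d hd0
    have hμm : 0 ≤ μ (m:ℝ) := (hμpos _).le
    have hμn : 0 ≤ μ (n:ℝ) := (hμpos _).le
    have hexp : Real.exp (-γ * d ^ β) * Real.exp (γ' * d ^ βμ)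
        ≤ Real.exp M * Real.exp (-δ * d ^ β) := by
      rw [← Real.exp_add, ← Real.exp_add]
      apply Real.exp_le_exp.2
      have hdb : 0 ≤ d ^ β := Real.rpow_nonneg hd0 _
      rw [hδdef] at h3 ⊢
      linarith
    calc ‖A m n‖ * μ (m:ℝ)
        ≤ (Cγ * Real.exp (-γ * d ^ β)) * (Cμ * Real.exp (γ' * d ^ βμ) * μ (n:ℝ)) := by
          apply mul_le_mul h1 h2 hμm (by positivity)
      _ = (Cγ * Cμ) * (Real.exp (-γ * d ^ β) * Real.exp (γ' * d ^ βμ)) * μ (n:ℝ) := by ring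
      _ ≤ (Cγ * Cμ) * (Real.exp M * Real.exp (-δ * d ^ β)) * μ (n:ℝ) := by
          apply mul_le_mul_of_nonneg_right _ hμn
          apply mul_le_mul_of_nonneg_left hexp (by positivity)
      _ = C' * Real.exp (-δ * d ^ β) * μ (n:ℝ) := by rw [hC'def]; ring
  -- the ENNReal kernel
  have hgsum : Summable (fun k : ℕ => Real.exp (-δ * (k:ℝ) ^ β)) := aux_summable_exp hδ hβ₀
  set g : ℕ → ℝ≥0∞ := fun k => ENNReal.ofReal (Real.exp (-δ * (k:ℝ) ^ β)) with hgdef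
  set G : ℝ≥0∞ := ∑' k, g k with hGdef
  have hGfin : G ≠ ∞ := by
    rw [hGdef, ← ENNReal.ofReal_tsum_of_nonneg (fun k => (Real.exp_pos _).le) hgsum]
    exact ENNReal.ofReal_ne_top
  have hG1 : 1 ≤ G := by
    have h0 : g 0 = 1 := by
      simp [hgdef, Real.zero_rpow hβ₀.ne']
    calc (1:ℝ≥0∞) = g 0 := h0.symm
      _ ≤ G := ENNReal.le_tsum 0
  set S : ℝ≥0∞ := ENNReal.ofReal C' * (2 * G) with hSdef
  have hS0 : S ≠ 0 := by
    rw [hSdef]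
    apply mul_ne_zero
    · simpa using hC'
    · intro h
      rw [mul_eq_zero] at h
      rcases h with h | h
      · norm_num at h
      · rw [h] at hG1; simp at hG1
  have hSfin : S ≠ ∞ := by
    rw [hSdef]
    exact ENNReal.mul_ne_top ENNReal.ofReal_ne_top
      (ENNReal.mul_ne_top (by norm_num) hGfin)
  set H : ℕ → ℕ → ℝ≥0∞ := fun m n => ENNReal.ofReal C' * g (Nat.dist m n) with hHdef
  have hrow : ∀ m, ∑' n, H m n ≤ S := by
    intro m
    rw [hHdef, hSdef]
    simp only
    rw [ENNReal.tsum_mul_left]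
    exact mul_le_mul_right (aux_row g m) _
  have hcol : ∀ n, ∑' m, H m n ≤ S := by
    intro n
    have : ∀ m, H m n = H n m := by
      intro m; simp only [hHdef, Nat.dist_comm]
    rw [tsum_congr this]
    exact hrow n
  -- cast of Nat.dist
  have hdist : ∀ m n : ℕ, ((Nat.dist m n : ℕ) : ℝ) = |(m:ℝ) - (n:ℝ)| := by
    intro m n
    rcases le_total m n with h | h
    · rw [Nat.dist_eq_sub_of_le h, Nat.cast_sub h, abs_sub_comm,
        abs_of_nonneg (sub_nonneg.2 (Nat.cast_le.2 h))]
    · rw [Nat.dist_eq_sub_of_le_right h, Nat.cast_sub h,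
        abs_of_nonneg (sub_nonneg.2 (Nat.cast_le.2 h))]
  refine ⟨S.toReal, ENNReal.toReal_pos hS0 hSfin, fun c hc => ?_⟩
  -- real weighted sequence
  set xr : ℕ → ℝ := fun n => ‖c (n+1)‖ * μ ((n:ℝ) + 1) with hxrdef
  have hxr0 : ∀ n, 0 ≤ xr n := fun n => by
    simp only [hxrdef]
    exact mul_nonneg (norm_nonneg _) (hμpos _).le
  have hterm_eq : ∀ n, ‖c (n+1)‖ ^ p * μ ((n:ℝ) + 1) ^ p = xr n ^ p := by
    intro n
    rw [hxrdef, ← Real.mul_rpow (norm_nonneg _) (hμpos _).le]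
  have hc' : Summable (fun n => xr n ^ p) := by
    refine hc.congr fun n => (hterm_eq n)
  -- bound on xr
  have hp0 : (0:ℝ) < p := lt_of_lt_of_le one_pos hp
  obtain ⟨B, hB⟩ : ∃ B : ℝ, ∀ n, xr n ^ p ≤ B := by
    have h0 : Tendsto (fun n => xr n ^ p) atTop (nhds 0) := hc'.tendsto_atTop_zero
    obtain ⟨B, hB⟩ := h0.bddAbove_range
    exact ⟨B, fun n => hB (Set.mem_range_self n)⟩
  have hXbd : ∀ n, xr n ≤ B ^ (1/p) := by
    intro n
    have h1 : (xr n ^ p) ^ (1/p) ≤ B ^ (1/p) := by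
      apply Real.rpow_le_rpow (Real.rpow_nonneg (hxr0 n) p) (hB n) (one_div_nonneg.2 hp0.le)
    rw [one_div, Real.rpow_rpow_inv (hxr0 n) hp0.ne'] at h1
    rwa [one_div]
  have hB0 : 0 ≤ B ^ (1/p) := le_trans (hxr0 0) (hXbd 0)
  -- Claim 1 : absolute convergence of rows
  have claim1 : ∀ m : ℕ, 1 ≤ m → Summable (fun n : ℕ => ‖A m (n+1) * c (n+1)‖) := by
    intro m hm
    have hsd : Summable (fun n : ℕ => Real.exp (-δ * ((Nat.dist m (n+1) : ℕ) : ℝ) ^ β)) := by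
      have h1 : Summable (fun n : ℕ => Real.exp (-δ * ((Nat.dist m n : ℕ) : ℝ) ^ β)) :=
        aux_dist_summable hgsum m
      exact (summable_nat_add_iff 1).2 h1
    apply Summable.of_nonneg_of_le (fun n => norm_nonneg _)
      (f := fun n => (C' * B ^ (1/p) / μ (m:ℝ)) *
        Real.exp (-δ * ((Nat.dist m (n+1) : ℕ) : ℝ) ^ β))
    · intro n
      have hk := hkey m (n+1) hm (by omega)
      have hμm := hμpos (m:ℝ)
      rw [norm_mul]
      have h2 : ‖A m (n+1)‖ * ‖c (n+1)‖ * μ (m:ℝ)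
          ≤ C' * Real.exp (-δ * |(m:ℝ) - ((n+1:ℕ):ℝ)| ^ β) * xr n := by
        have : ‖A m (n+1)‖ * ‖c (n+1)‖ * μ (m:ℝ)
            = (‖A m (n+1)‖ * μ (m:ℝ)) * ‖c (n+1)‖ := by ring
        rw [this, hxrdef]
        have := mul_le_mul_of_nonneg_right hk (norm_nonneg (c (n+1)))
        calc ‖A m (n+1)‖ * μ (m:ℝ) * ‖c (n+1)‖
            ≤ C' * Real.exp (-δ * |(m:ℝ) - ((n+1:ℕ):ℝ)| ^ β) * μ ((n+1:ℕ):ℝ) * ‖c (n+1)‖ := this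
          _ = C' * Real.exp (-δ * |(m:ℝ) - ((n+1:ℕ):ℝ)| ^ β) * (‖c (n+1)‖ * μ ((n:ℝ)+1)) := by
              push_cast; ring
      have h3 : xr n ≤ B ^ (1/p) := hXbd n
      have h4 : ‖A m (n+1)‖ * ‖c (n+1)‖ * μ (m:ℝ)
          ≤ C' * B ^ (1/p) * Real.exp (-δ * ((Nat.dist m (n+1) : ℕ) : ℝ) ^ β) := by
        rw [hdist m (n+1)]
        calc ‖A m (n+1)‖ * ‖c (n+1)‖ * μ (m:ℝ)
            ≤ C' * Real.exp (-δ * |(m:ℝ) - ((n+1:ℕ):ℝ)| ^ β) * xr n := h2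
          _ ≤ C' * Real.exp (-δ * |(m:ℝ) - ((n+1:ℕ):ℝ)| ^ β) * (B ^ (1/p)) := by
              apply mul_le_mul_of_nonneg_left h3 (by positivity)
          _ = C' * B ^ (1/p) * Real.exp (-δ * |(m:ℝ) - ((n+1:ℕ):ℝ)| ^ β) := by ring
      rw [div_mul_eq_mul_div, le_div_iff₀ hμm]
      linarith
    · exact hsd.mul_left _
  refine ⟨claim1, ?_⟩
  -- ENNReal machinery
  set x : ℕ → ℝ≥0∞ := fun n => ENNReal.ofReal (xr n) with hxdef
  have hxp : ∀ n, x n ^ p = ENNReal.ofReal (xr n ^ p) := by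
    intro n
    rw [hxdef, ← ENNReal.ofReal_rpow_of_nonneg (hxr0 n) hp0.le]
  have hsumx : ∑' n, x n ^ p = ENNReal.ofReal (∑' n, xr n ^ p) := by
    rw [ENNReal.ofReal_tsum_of_nonneg (fun n => Real.rpow_nonneg (hxr0 n) p) hc']
    exact tsum_congr hxp
  have hsumx_fin : ∑' n, x n ^ p ≠ ∞ := by rw [hsumx]; exact ENNReal.ofReal_ne_top
  -- pointwise ENNReal bound
  have hpt : ∀ m n : ℕ,
      ENNReal.ofReal (‖A (m+1) (n+1) * c (n+1)‖ * μ ((m:ℝ) + 1)) ≤ H m n * x n := by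
    intro m n
    have hk := hkey (m+1) (n+1) (by omega) (by omega)
    have habs : |((m+1:ℕ):ℝ) - ((n+1:ℕ):ℝ)| = ((Nat.dist m n : ℕ) : ℝ) := by
      rw [hdist m n]; push_cast; congr 1; ring
    have hreal : ‖A (m+1) (n+1) * c (n+1)‖ * μ ((m:ℝ) + 1)
        ≤ C' * Real.exp (-δ * ((Nat.dist m n : ℕ) : ℝ) ^ β) * xr n := by
      rw [norm_mul]
      have e1 : μ ((m:ℝ) + 1) = μ (((m+1:ℕ)):ℝ) := by push_cast; ring_nf
      rw [e1]
      calc ‖A (m+1) (n+1)‖ * ‖c (n+1)‖ * μ (((m+1:ℕ)):ℝ)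
          = (‖A (m+1) (n+1)‖ * μ (((m+1:ℕ)):ℝ)) * ‖c (n+1)‖ := by ring
        _ ≤ (C' * Real.exp (-δ * |((m+1:ℕ):ℝ) - ((n+1:ℕ):ℝ)| ^ β) * μ (((n+1:ℕ)):ℝ))
              * ‖c (n+1)‖ := mul_le_mul_of_nonneg_right hk (norm_nonneg _)
        _ = C' * Real.exp (-δ * |((m+1:ℕ):ℝ) - ((n+1:ℕ):ℝ)| ^ β) * (‖c (n+1)‖ * μ ((n:ℝ)+1)) := by
            push_cast; ring
        _ = C' * Real.exp (-δ * ((Nat.dist m n : ℕ) : ℝ) ^ β) * xr n := by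
            rw [habs, hxrdef]
    calc ENNReal.ofReal (‖A (m+1) (n+1) * c (n+1)‖ * μ ((m:ℝ) + 1))
        ≤ ENNReal.ofReal (C' * Real.exp (-δ * ((Nat.dist m n : ℕ) : ℝ) ^ β) * xr n) :=
          ENNReal.ofReal_le_ofReal hreal
      _ = H m n * x n := by
          rw [ENNReal.ofReal_mul (by positivity), ENNReal.ofReal_mul hC'.le]
  -- row bound for a_m
  have ham : ∀ m : ℕ,
      ENNReal.ofReal (‖∑' n : ℕ, A (m+1) (n+1) * c (n+1)‖ * μ ((m:ℝ) + 1))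
        ≤ ∑' n, H m n * x n := by
    intro m
    have hsm := claim1 (m+1) (by omega)
    have h1 : ‖∑' n : ℕ, A (m+1) (n+1) * c (n+1)‖ * μ ((m:ℝ) + 1)
        ≤ ∑' n : ℕ, ‖A (m+1) (n+1) * c (n+1)‖ * μ ((m:ℝ) + 1) := by
      rw [tsum_mul_right]
      apply mul_le_mul_of_nonneg_right (norm_tsum_le_tsum_norm hsm) (hμpos _).le
    calc ENNReal.ofReal (‖∑' n : ℕ, A (m+1) (n+1) * c (n+1)‖ * μ ((m:ℝ) + 1))
        ≤ ENNReal.ofReal (∑' n : ℕ, ‖A (m+1) (n+1) * c (n+1)‖ * μ ((m:ℝ) + 1)) :=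
          ENNReal.ofReal_le_ofReal h1
      _ = ∑' n : ℕ, ENNReal.ofReal (‖A (m+1) (n+1) * c (n+1)‖ * μ ((m:ℝ) + 1)) := by
          apply ENNReal.ofReal_tsum_of_nonneg
            (fun n => mul_nonneg (norm_nonneg _) (hμpos _).le) (hsm.mul_right _)
      _ ≤ ∑' n, H m n * x n := ENNReal.tsum_le_tsum (hpt m)
  -- apply Schur
  have hschur := aux_schur hp H x S hS0 hSfin hrow hcol
  -- real a_m terms
  set am : ℕ → ℝ := fun m => ‖∑' n : ℕ, A (m+1) (n+1) * c (n+1)‖ * μ ((m:ℝ) + 1) with hamdef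
  have ham0 : ∀ m, 0 ≤ am m := fun m => by
    simp only [hamdef]
    exact mul_nonneg (norm_nonneg _) (hμpos _).le
  have hterm2 : ∀ m, ‖∑' n : ℕ, A (m+1) (n+1) * c (n+1)‖ ^ p * μ ((m:ℝ) + 1) ^ p = am m ^ p := by
    intro m
    rw [hamdef, ← Real.mul_rpow (norm_nonneg _) (hμpos _).le]
  have hbound : ∑' m : ℕ, ENNReal.ofReal (am m ^ p) ≤ S ^ p * ∑' n, x n ^ p := by
    refine le_trans (ENNReal.tsum_le_tsum fun m => ?_) hschur
    rw [← ENNReal.ofReal_rpow_of_nonneg (ham0 m) hp0.le]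
    exact ENNReal.rpow_le_rpow (ham m) hp0.le
  have hfin : ∑' m : ℕ, ENNReal.ofReal (am m ^ p) ≠ ∞ := by
    apply ne_top_of_le_ne_top _ hbound
    exact ENNReal.mul_ne_top (ENNReal.rpow_ne_top_of_nonneg hp0.le hSfin) hsumx_fin
  have hsummable2 : Summable (fun m : ℕ => am m ^ p) := by
    have h := ENNReal.summable_toReal hfin
    refine h.congr fun m => ?_
    rw [ENNReal.toReal_ofReal (Real.rpow_nonneg (ham0 m) p)]
  constructor
  · exact hsummable2.congr fun m => (hterm2 m).symm
  · -- final inequality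
    have hLHS : ∑' m : ℕ, ‖∑' n : ℕ, A (m+1) (n+1) * c (n+1)‖ ^ p * μ ((m:ℝ) + 1) ^ p
        = ∑' m, am m ^ p := tsum_congr hterm2
    have hRHS : ∑' n : ℕ, ‖c (n+1)‖ ^ p * μ ((n:ℝ) + 1) ^ p = ∑' n, xr n ^ p :=
      tsum_congr hterm_eq
    rw [hLHS, hRHS]
    have hK0 : 0 ≤ S.toReal := ENNReal.toReal_nonneg
    rw [← ENNReal.ofReal_le_ofReal_iff (mul_nonneg (Real.rpow_nonneg hK0 p)
      (tsum_nonneg fun n => Real.rpow_nonneg (hxr0 n) p))]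
    calc ENNReal.ofReal (∑' m, am m ^ p)
        = ∑' m : ℕ, ENNReal.ofReal (am m ^ p) :=
          ENNReal.ofReal_tsum_of_nonneg (fun m => Real.rpow_nonneg (ham0 m) p) hsummable2
      _ ≤ S ^ p * ∑' n, x n ^ p := hbound
      _ = ENNReal.ofReal (S.toReal ^ p * ∑' n, xr n ^ p) := by
          rw [ENNReal.ofReal_mul (Real.rpow_nonneg hK0 p), ← hsumx]
          congr 1
          rw [← ENNReal.ofReal_rpow_of_nonneg hK0 hp0.le, ENNReal.ofReal_toReal hSfin]
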